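/- arXiv:1910.02888 — 2 statements merged into one kernel-verified Lean document; each statement's English description precedes it below -/
import Mathlib

section
/- Let K be a valued field with value group Γ(K), and F ⊆ K a subfield such that the standard part property holds (every element of K whose valuation exceeds that of some element of F is within infinitesimal distance, relative to F, of an element of F). Then the value group Γ(F) = v(F×) is a convex subgroup of Γ(K): if 0 ≤ γ ≤ δ with δ ∈ Γ(F) and γ ∈ Γ(K), then γ ∈ Γ(F). -/
/-- If `F ⊆ K` has the standard part property, then `Γ(F) = v(F×)` is a convex
subgroup of `Γ(K)`: if `0 ≤ v a ≤ v d` with `d ∈ F×` and `a ∈ K×`, then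
`v a ∈ v(F×)`. -/
theorem stmt_3 {K Γ : Type*} [Field K] [AddCommGroup Γ] [LinearOrder Γ] [IsOrderedAddMonoid Γ]
    (v : AddValuation K (WithTop Γ)) (F : Subfield K)
    (hstd : ∀ b : K, (∃ a ∈ F, a ≠ 0 ∧ v a < v b) →
      ∃ a' ∈ F, ∀ c ∈ F, c ≠ 0 → v c < v (b - a'))
    (a : K) (ha : a ≠ 0) (d : K) (hd : d ∈ F) (hd0 : d ≠ 0)
    (h0 : (0 : WithTop Γ) ≤ v a) (hle : v a ≤ v d) :
    ∃ a' ∈ F, a' ≠ 0 ∧ v a' = v a := by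
  rcases eq_or_lt_of_le h0 with h0 | h0
  · exact ⟨1, F.one_mem, one_ne_zero, by simp [← h0]⟩
  set b := a * d with hb
  have hvb : v b = v a + v d := v.map_mul a d
  have hvdlt : v d < v b := by
    rw [hvb]
    calc v d = 0 + v d := by rw [zero_add]
    _ < v a + v d := by
        apply WithTop.add_lt_add_right _ h0
        exact (v.ne_top_iff).mpr hd0
  obtain ⟨a', ha'F, ha'⟩ := hstd b ⟨d, hd, hd0, hvdlt⟩
  have hdd : v (d * d) < v (b - a') := ha' (d * d) (F.mul_mem hd hd) (mul_ne_zero hd0 hd0)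
  have hblt : v b < v (b - a') := by
    refine lt_of_le_of_lt ?_ hdd
    rw [hvb, v.map_mul]
    exact add_le_add_left hle _
  have ha'0 : a' ≠ 0 := by
    rintro rfl
    rw [sub_zero] at hblt
    exact lt_irrefl _ hblt
  have hva' : v a' = v b := by
    apply v.map_eq_of_lt_sub
    rwa [v.map_sub_swap]
  refine ⟨a' * d⁻¹, F.mul_mem ha'F (F.inv_mem hd), mul_ne_zero ha'0 (inv_ne_zero hd0), ?_⟩
  have hdne : v d ≠ ⊤ := (v.ne_top_iff).mpr hd0
  have : v (a' * d⁻¹) + v d = v a + v d := by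
    rw [← v.map_mul, mul_assoc, inv_mul_cancel₀ hd0, mul_one, hva', hvb]
  exact WithTop.add_right_cancel hdne this
end

section
/- Let K be an algebraically closed field and C ⊆ K a set which is a ball minus finitely many proper sub-balls with respect to a valuation v on K: C = B \ (B₁ ∪ … ∪ Bₘ) where B = { x : v(x − c) > γ } and each Bᵢ ⊊ B is a ball. If B properly contains each Bᵢ and m balls cannot cover B (e.g., because the residue field is infinite), then C is nonempty. -/
/-- In an algebraically closed valued field with infinite residue field, a ball minus
finitely many proper sub-balls is nonempty. -/
theorem stmt_17 {K Γ : Type*} [Field K] [IsAlgClosed K] [AddCommGroup Γ] [LinearOrder Γ] [IsOrderedAddMonoid Γ]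
    (v : AddValuation K (WithTop Γ))
    -- the residue field is infinite: infinitely many residue classes in the valuation ring
    (hres : ∃ f : ℕ → K, (∀ i, (0 : WithTop Γ) ≤ v (f i)) ∧
      ∀ i j, i ≠ j → v (f i - f j) = 0)
    (c : K) (γ : Γ)
    (m : ℕ) (Bs : Fin m → Set K)
    (hballs : ∀ i, ∃ c' : K, ∃ γ' : Γ,
      Bs i = {x : K | (γ' : WithTop Γ) < v (x - c')} ∨
      Bs i = {x : K | (γ' : WithTop Γ) ≤ v (x - c')})
    (hsub : ∀ i, Bs i ⊆ {x : K | (γ : WithTop Γ) < v (x - c)})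
    (hproper : ∀ i, Bs i ≠ {x : K | (γ : WithTop Γ) < v (x - c)}) :
    ({x : K | (γ : WithTop Γ) < v (x - c)} \ ⋃ i, Bs i).Nonempty := by
  obtain ⟨f, hf0, hfd⟩ := hres
  rcases Nat.eq_zero_or_pos m with hm | hm
  · subst hm
    refine ⟨c, ?_, ?_⟩
    · simp [sub_self, v.map_zero]
    · simp
  have hne : Nonempty (Fin m) := ⟨⟨0, hm⟩⟩
  -- extract ball data
  choose cc gg hform using hballs
  -- each center is in its ball, hence in B
  have hcmem : ∀ i, cc i ∈ Bs i := by
    intro i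
    rcases hform i with h | h <;> rw [h] <;> simp [sub_self, v.map_zero]
  have hcB : ∀ i, (γ : WithTop Γ) < v (cc i - c) := fun i => hsub i (hcmem i)
  -- pick a witness in B \ Bs i for each i
  have hwit : ∀ i, ∃ y : K, (γ : WithTop Γ) < v (y - c) ∧ y ∉ Bs i := by
    intro i
    have hss : Bs i ⊂ {x : K | (γ : WithTop Γ) < v (x - c)} :=
      (hsub i).ssubset_of_ne (hproper i)
    obtain ⟨y, hy1, hy2⟩ := Set.exists_of_ssubset hss
    exact ⟨y, hy1, hy2⟩
  choose y hyB hyN using hwit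
  -- ρ i = v (y i - cc i) : a realized value with γ < ρ i and ρ i ≤/< gg i
  set ρ : Fin m → WithTop Γ := fun i => v (y i - cc i) with hρ
  have hργ : ∀ i, (γ : WithTop Γ) < ρ i := by
    intro i
    have : min (v (y i - c)) (v (c - cc i)) ≤ v (y i - cc i) := by
      have := v.map_add (y i - c) (c - cc i)
      simpa [sub_add_sub_cancel] using this
    refine lt_of_lt_of_le (lt_min (hyB i) ?_) this
    rw [v.map_sub_swap]; exact hcB i
  have hρbound : ∀ i,
      (Bs i = {x : K | (gg i : WithTop Γ) < v (x - cc i)} ∧ ρ i ≤ (gg i : WithTop Γ)) ∨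
      (Bs i = {x : K | (gg i : WithTop Γ) ≤ v (x - cc i)} ∧ ρ i < (gg i : WithTop Γ)) := by
    intro i
    rcases hform i with h | h
    · refine Or.inl ⟨h, ?_⟩
      have := hyN i
      rw [h] at this
      simpa using not_lt.mp this
    · refine Or.inr ⟨h, ?_⟩
      have := hyN i
      rw [h] at this
      simpa using not_le.mp this
  -- take the minimal ρ, realized by d
  obtain ⟨i₀, hi₀⟩ := Finite.exists_min ρ
  set d : K := y i₀ - cc i₀ with hd
  have hvd : v d = ρ i₀ := rfl
  -- the m+1 test points
  set p : Fin (m + 1) → K := fun j => c + d * f j with hp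
  have hpB : ∀ j, (γ : WithTop Γ) < v (p j - c) := by
    intro j
    have : v (p j - c) = v d + v (f j) := by
      simp only [hp, add_sub_cancel_left, v.map_mul]
    rw [this, hvd]
    calc (γ : WithTop Γ) < ρ i₀ := hργ i₀
      _ = ρ i₀ + 0 := by rw [add_zero]
      _ ≤ ρ i₀ + v (f j) := add_le_add_right (hf0 j) _
  have hdist : ∀ j k : Fin (m + 1), j ≠ k → v (p j - p k) = v d := by
    intro j k hjk
    have : p j - p k = d * (f j - f k) := by ring
    rw [this, v.map_mul, hfd j k (fun h => hjk (Fin.val_injective h))]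
    · rw [add_zero]
  -- each ball contains at most one test point
  have hatmost : ∀ i (j k : Fin (m + 1)), j ≠ k → p j ∈ Bs i → p k ∈ Bs i → False := by
    intro i j k hjk hj hk
    have hdjk : v (p j - p k) = ρ i₀ := by rw [hdist j k hjk, hvd]
    have hmin : ρ i₀ ≤ ρ i := hi₀ i
    rcases hρbound i with ⟨h, hle⟩ | ⟨h, hlt⟩
    · rw [h] at hj hk
      have : (gg i : WithTop Γ) < v (p j - p k) := by
        have := v.map_sub (p j - cc i) (p k - cc i)
        rw [show (p j - cc i) - (p k - cc i) = p j - p k by ring] at this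
        exact lt_of_lt_of_le (lt_min hj hk) this
      rw [hdjk] at this
      exact absurd (hmin.trans hle) (not_le.mpr this)
    · rw [h] at hj hk
      have : (gg i : WithTop Γ) ≤ v (p j - p k) := by
        have := v.map_sub (p j - cc i) (p k - cc i)
        rw [show (p j - cc i) - (p k - cc i) = p j - p k by ring] at this
        exact le_trans (le_min hj hk) this
      rw [hdjk] at this
      exact absurd (hmin.trans_lt hlt) (not_lt.mpr this)
  -- pigeonhole
  by_contra hcon
  rw [Set.not_nonempty_iff_eq_empty, Set.diff_eq_empty] at hcon
  have hall : ∀ j : Fin (m + 1), ∃ i, p j ∈ Bs i := by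
    intro j
    have := hcon (hpB j)
    simpa using this
  choose g hg using hall
  obtain ⟨j, k, hjk, hgjk⟩ := Fintype.exists_ne_map_eq_of_card_lt g (by simp)
  exact hatmost (g j) j k hjk (hg j) (hgjk ▸ hg k)
end
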